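/- (One-shot Slepian-Wolf coding, converse part.) For any ε ∈ [0,1), any Slepian-Wolf code (φ,ψ) with error probability ε(C) ≤ ε, and any δ > 0, there exists a family (ε_x)_{x∈𝒳} with ε_x ∈ [0,1] for every x such that Σ_{x∈𝒳} P_X(x)·ε_x ≤ ε + 2^{−δ} and ℓ(x) ≥ h̄^{ε_x}(x) − δ for every x ∈ 𝒳. -/
import Mathlib


open Filter Topology

noncomputable section

/-- A joint probability mass function on `X × Y` (all information quantities are base 2),
with everywhere-positive marginals. -/
structure JointPMF (X Y : Type) where
  p : X → Y → ℝ
  nonneg : ∀ x y, 0 ≤ p x y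
  hasSum_one : HasSum (fun z : X × Y => p z.1 z.2) 1
  margX_pos : ∀ x, 0 < ∑' y, p x y
  margY_pos : ∀ y, 0 < ∑' x, p x y

namespace JointPMF

variable {X Y : Type}

/-- marginal `P_X` -/
def pX (P : JointPMF X Y) (x : X) : ℝ := ∑' y, P.p x y

/-- marginal `P_Y` -/
def pY (P : JointPMF X Y) (y : Y) : ℝ := ∑' x, P.p x y

/-- conditional probability `P_{X|Y}(x|y)` -/
def condXY (P : JointPMF X Y) (x : X) (y : Y) : ℝ := P.p x y / P.pY y

/-- conditional probability `P_{Y|X}(y|x)` -/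
def condYX (P : JointPMF X Y) (x : X) (y : Y) : ℝ := P.p x y / P.pX x

/-- probability of a set of pairs -/
def prob (P : JointPMF X Y) (A : Set (X × Y)) : ℝ :=
  ∑' z : X × Y, A.indicator (fun z => P.p z.1 z.2) z

/-- probability of a set of `x`'s under the marginal `P_X` -/
def probX (P : JointPMF X Y) (A : Set X) : ℝ :=
  ∑' x : X, A.indicator (fun x => P.pX x) x

/-- conditional self-information `log₂(1/P_{X|Y}(x|y))` -/
def iXY (P : JointPMF X Y) (x : X) (y : Y) : ℝ := Real.logb 2 (1 / P.condXY x y)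

/-- `Q^A(x,y) = P_{XY}(x,y)·1[(x,y)∈A]/P_{XY}(A)` -/
def QA (P : JointPMF X Y) (A : Set (X × Y)) (z : X × Y) : ℝ :=
  A.indicator (fun z => P.p z.1 z.2) z / P.prob A

/-- `Q^A_Y(y) = Σ_x Q^A(x,y)` -/
def QAY (P : JointPMF X Y) (A : Set (X × Y)) (y : Y) : ℝ := ∑' x, P.QA A (x, y)

/-- `H_A(X|Y) = Σ_{(x,y)∈A} Q^A(x,y) log₂(Q^A_Y(y)/Q^A(x,y))` -/
def HA (P : JointPMF X Y) (A : Set (X × Y)) : ℝ :=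
  ∑' z : X × Y, A.indicator (fun z => P.QA A z * Real.logb 2 (P.QAY A z.2 / P.QA A z)) z

/-- `He^ε(X|Y)`: infimum of `P(A)·H_A(X|Y)` over `A` with `P(A) ≥ 1−ε`. -/
def He (P : JointPMF X Y) (ε : ℝ) : ℝ :=
  sInf {v : ℝ | ∃ A : Set (X × Y), 1 - ε ≤ P.prob A ∧ v = P.prob A * P.HA A}

/-- `Σ_{(x,y)∈A} P_{XY}(x,y) log₂(1/P_{X|Y}(x|y))` -/
def infoSum (P : JointPMF X Y) (A : Set (X × Y)) : ℝ :=
  ∑' z : X × Y, A.indicator (fun z => P.p z.1 z.2 * P.iXY z.1 z.2) z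

/-- `tHe^ε(X|Y)` -/
def tHe (P : JointPMF X Y) (ε : ℝ) : ℝ :=
  sInf {v : ℝ | ∃ A : Set (X × Y), 1 - ε ≤ P.prob A ∧ v = P.infoSum A}

/-- Shannon conditional entropy `H(X|Y)` -/
def condEnt (P : JointPMF X Y) : ℝ :=
  ∑' z : X × Y, P.p z.1 z.2 * P.iXY z.1 z.2

/-- `Pr{ log₂(1/P_{X|Y}(x|Y)) > R | X = x }` -/
def tailProb (P : JointPMF X Y) (x : X) (R : ℝ) : ℝ :=
  ∑' y : Y, {y : Y | R < P.iXY x y}.indicator (fun y => P.condYX x y) y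

/-- `h̄^ε(x)` (real-valued version) -/
def hbar (P : JointPMF X Y) (ε : ℝ) (x : X) : ℝ :=
  sInf {R : ℝ | P.tailProb x R ≤ ε}

/-- `h̄^ε(x)` (extended-real-valued version) -/
def hbarE (P : JointPMF X Y) (ε : ℝ) (x : X) : EReal :=
  sInf {R : EReal | ∃ r : ℝ, R = (r : EReal) ∧ P.tailProb x r ≤ ε}

/-- `H̄_s^ε(X|Y) = Σ_x P_X(x)·h̄^ε(x)` -/
def HsEps (P : JointPMF X Y) (ε : ℝ) : ℝ := ∑' x, P.pX x * P.hbar ε x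

end JointPMF

/-- Partial sum `Σ_{i<k} P(e i) log₂(1/P_{X|Y}(e i))` along an enumeration `e`. -/
def hHeSum {X Y : Type} (P : JointPMF X Y) (e : ℕ → X × Y) (k : ℕ) : ℝ :=
  ∑ i ∈ Finset.range k, P.p (e i).1 (e i).2 * P.iXY (e i).1 (e i).2

/-- A variable-length code with common side-information: for each `y` the set of codewords
`{enc x y : x}` satisfies the prefix condition (no codeword is a proper prefix of another). -/
structure CSICode (X Y : Type) where
  enc : X → Y → List Bool
  dec : List Bool → Y → X
  prefixFree : ∀ (y : Y) (x x' : X), (enc x y) <+: (enc x' y) → enc x y = enc x' y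

namespace CSICode

variable {X Y : Type}

/-- error probability `Pr{ψ(φ(X|Y),Y) ≠ X}` -/
def err (C : CSICode X Y) (P : JointPMF X Y) : ℝ :=
  P.prob {z | C.dec (C.enc z.1 z.2) z.2 ≠ z.1}

/-- average codeword length `E[ℓ(X|Y)]` -/
def avgLen (C : CSICode X Y) (P : JointPMF X Y) : ℝ :=
  ∑' z : X × Y, P.p z.1 z.2 * ((C.enc z.1 z.2).length : ℝ)

end CSICode

/-- A Slepian-Wolf code: prefix-free encoder of `x` alone, decoder with side information. -/
structure SWCode (X Y : Type) where
  enc : X → List Bool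
  dec : List Bool → Y → X
  prefixFree : ∀ x x', (enc x) <+: (enc x') → enc x = enc x'

namespace SWCode

variable {X Y : Type}

/-- error probability `Pr{ψ(φ(X),Y) ≠ X}` -/
def err (C : SWCode X Y) (P : JointPMF X Y) : ℝ :=
  P.prob {z | C.dec (C.enc z.1) z.2 ≠ z.1}

/-- codeword length `ℓ(x)` -/
def len (C : SWCode X Y) (x : X) : ℕ := (C.enc x).length

/-- average codeword length `E[ℓ(X)]` -/
def avgLen (C : SWCode X Y) (P : JointPMF X Y) : ℝ :=
  ∑' x : X, P.pX x * ((C.enc x).length : ℝ)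

end SWCode

/-- A general correlated source: for each blocklength `n`, a joint pmf on `𝒳ⁿ × 𝒴ⁿ`. -/
abbrev Source (X Y : Type) : Type := (n : ℕ) → JointPMF (Fin n → X) (Fin n → Y)

section Sources

variable {X Y : Type}

/-- normalized conditional self-information `Zₙ = (1/n) log₂(1/P_{Xⁿ|Yⁿ})` -/
def nInfo (S : Source X Y) (n : ℕ) (z : (Fin n → X) × (Fin n → Y)) : ℝ :=
  (1/(n:ℝ)) * (S n).iXY z.1 z.2

/-- uniform integrability: `lim_{u→∞} sup_n E[Zₙ·1{Zₙ ≥ u}] = 0` -/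
def UniformlyIntegrable (S : Source X Y) : Prop :=
  ∀ δ > (0:ℝ), ∃ u₀ : ℝ, ∀ u ≥ u₀, ∀ n : ℕ,
    (∑' z : (Fin n → X) × (Fin n → Y),
      {z | u ≤ nInfo S n z}.indicator (fun z => (S n).p z.1 z.2 * nInfo S n z) z) ≤ δ

/-- spectral conditional sup-entropy rate `H̄(X|Y) = p-limsup Zₙ` -/
def specCondSup (S : Source X Y) : ℝ :=
  sInf {α : ℝ | Tendsto (fun n : ℕ => (S n).prob {z | α < nInfo S n z}) atTop (𝓝 0)}

/-- spectral conditional inf-entropy rate `H̲(X|Y) = p-liminf Zₙ` -/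
def specCondInf (S : Source X Y) : ℝ :=
  sSup {β : ℝ | Tendsto (fun n : ℕ => (S n).prob {z | nInfo S n z < β}) atTop (𝓝 0)}

/-- spectral inf-divergence rate `D̲(X₁‖X₂)` between the marginal processes -/
def specInfDiv (S1 S2 : Source X Y) : ℝ :=
  sSup {β : ℝ | Tendsto (fun n : ℕ =>
    (S1 n).probX {x | (1/(n:ℝ)) * Real.logb 2 ((S1 n).pX x / (S2 n).pX x) < β})
    atTop (𝓝 0)}

/-- optimal rate achievable by ε-coding with common side-information -/
def RcomEps (S : Source X Y) (ε : ℝ) : ℝ :=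
  sInf {R : ℝ | ∃ C : (n : ℕ) → CSICode (Fin n → X) (Fin n → Y),
    limsup (fun n : ℕ => (C n).err (S n)) atTop ≤ ε ∧
    limsup (fun n : ℕ => (1/(n:ℝ)) * (C n).avgLen (S n)) atTop ≤ R}

/-- optimal rate achievable by ε-Slepian-Wolf coding -/
def RSWeps (S : Source X Y) (ε : ℝ) : ℝ :=
  sInf {R : ℝ | ∃ C : (n : ℕ) → SWCode (Fin n → X) (Fin n → Y),
    limsup (fun n : ℕ => (C n).err (S n)) atTop ≤ ε ∧
    limsup (fun n : ℕ => (1/(n:ℝ)) * (C n).avgLen (S n)) atTop ≤ R}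

/-- optimal rate achievable by weakly lossless Slepian-Wolf coding -/
def RSW (S : Source X Y) : ℝ :=
  sInf {R : ℝ | ∃ C : (n : ℕ) → SWCode (Fin n → X) (Fin n → Y),
    Tendsto (fun n : ℕ => (C n).err (S n)) atTop (𝓝 0) ∧
    limsup (fun n : ℕ => (1/(n:ℝ)) * (C n).avgLen (S n)) atTop ≤ R}

/-- `H̄_s(X|Y) = lim_{ε↓0} limsup_n (1/n) H̄_s^ε(Xⁿ|Yⁿ)`. Since the inner quantity is
nonincreasing in `ε`, the right limit at `0` equals the supremum over `ε > 0`. -/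
def Hs (S : Source X Y) : ℝ :=
  ⨆ ε ∈ Set.Ioi (0:ℝ), limsup (fun n : ℕ => (1/(n:ℝ)) * (S n).HsEps ε) atTop

/-- `(X,Y)` is the mixture of `(X₁,Y₁)` and `(X₂,Y₂)` with weights `α₁, α₂`. -/
def IsMixture2 (S S1 S2 : Source X Y) (α1 α2 : ℝ) : Prop :=
  ∀ n x y, (S n).p x y = α1 * (S1 n).p x y + α2 * (S2 n).p x y

end Sources


open Classical in
lemma kraft_finset (S : Finset (List Bool))
    (hpf : ∀ w ∈ S, ∀ w' ∈ S, w <+: w' → w = w') :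
    ∑ w ∈ S, (2:ℝ) ^ (-(w.length:ℝ)) ≤ 1 := by
  set n := S.sup List.length with hn
  have hlen : ∀ w ∈ S, w.length ≤ n := fun w hw => Finset.le_sup hw
  set ext : List Bool → Finset (List Bool) :=
    fun w => (Finset.univ : Finset (Fin (n - w.length) → Bool)).image
      (fun s => w ++ List.ofFn s) with hext
  have hcard : ∀ w : List Bool, (ext w).card = 2 ^ (n - w.length) := by
    intro w
    rw [hext]
    rw [Finset.card_image_of_injective _ ?_, Finset.card_univ]
    · simp
    · intro s t h
      simp only [List.append_cancel_left_eq] at h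
      exact List.ofFn_injective h
  have hmem_pref : ∀ w v, v ∈ ext w → w <+: v := by
    intro w v hv
    simp only [hext, Finset.mem_image] at hv
    obtain ⟨s, _, rfl⟩ := hv
    exact ⟨_, rfl⟩
  have hmem_len : ∀ w ∈ S, ∀ v ∈ ext w, v.length = n := by
    intro w hw v hv
    simp only [hext, Finset.mem_image] at hv
    obtain ⟨s, _, rfl⟩ := hv
    simp [Nat.add_sub_cancel' (hlen w hw)]
  have hdisj : ∀ w ∈ S, ∀ w' ∈ S, w ≠ w' → Disjoint (ext w) (ext w') := by
    intro w hw w' hw' hne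
    rw [Finset.disjoint_left]
    intro v hv hv'
    rcases List.prefix_or_prefix_of_prefix (hmem_pref w v hv) (hmem_pref w' v hv') with h | h
    · exact hne (hpf w hw w' hw' h)
    · exact hne ((hpf w' hw' w hw h).symm)
  have hcard_biUnion : (S.biUnion ext).card = ∑ w ∈ S, (ext w).card :=
    Finset.card_biUnion hdisj
  have hsub : (S.biUnion ext).card ≤ 2 ^ n := by
    have h1 : (S.biUnion ext).card ≤ (Finset.univ : Finset (Fin n → Bool)).card := by
      apply Finset.card_le_card_of_injOn (fun (v : List Bool) (i : Fin n) => v.getD i.val false)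
      · intro v _; exact Finset.mem_univ _
      · intro v hv v' hv' h
        obtain ⟨w, hw, hvw⟩ := Finset.mem_biUnion.1 hv
        obtain ⟨w', hw', hvw'⟩ := Finset.mem_biUnion.1 hv'
        have l1 := hmem_len w hw v hvw
        have l2 := hmem_len w' hw' v' hvw'
        apply List.ext_getElem (l1.trans l2.symm)
        intro i hi hi'
        have hin : i < n := l1 ▸ hi
        have := congrFun h ⟨i, hin⟩
        simpa [List.getD_eq_getElem, hi, hi'] using this
    simpa [Finset.card_univ] using h1
  have hnat : ∑ w ∈ S, 2 ^ (n - w.length) ≤ 2 ^ n := by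
    calc ∑ w ∈ S, 2 ^ (n - w.length) = (S.biUnion ext).card := by
          rw [hcard_biUnion]; exact (Finset.sum_congr rfl fun w _ => (hcard w).symm)
      _ ≤ 2 ^ n := hsub
  have h2n : (0:ℝ) < 2 ^ n := by positivity
  have key : ∀ w ∈ S, (2:ℝ) ^ (-(w.length:ℝ)) = ((2 ^ (n - w.length) : ℕ) : ℝ) / 2 ^ n := by
    intro w hw
    have hwl := hlen w hw
    have hmul : (2:ℝ) ^ (n - w.length) * 2 ^ w.length = 2 ^ n := by
      rw [← pow_add, Nat.sub_add_cancel hwl]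
    rw [Real.rpow_neg (by norm_num), Real.rpow_natCast]
    push_cast
    field_simp
    linarith [hmul]
  calc ∑ w ∈ S, (2:ℝ) ^ (-(w.length:ℝ))
      = ∑ w ∈ S, ((2 ^ (n - w.length) : ℕ) : ℝ) / 2 ^ n := Finset.sum_congr rfl key
    _ = ((∑ w ∈ S, (2:ℕ) ^ (n - w.length) : ℕ) : ℝ) / 2 ^ n := by
        rw [← Finset.sum_div]; push_cast; ring
    _ ≤ ((2:ℝ) ^ n) / 2 ^ n := by gcongr; exact_mod_cast hnat
    _ = 1 := div_self (ne_of_gt h2n)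

section OneShotHelpers

variable {X Y : Type}

end OneShotHelpers

/-- One-shot Slepian-Wolf coding, converse part. -/
theorem one_shot_SW_converse {X Y : Type} [Countable X] [Countable Y]
    (P : JointPMF X Y) (ε : ℝ) (hε : ε ∈ Set.Ico (0:ℝ) 1)
    (C : SWCode X Y) (herr : C.err P ≤ ε) (δ : ℝ) (hδ : 0 < δ) :
    ∃ εf : X → ℝ, (∀ x, εf x ∈ Set.Icc (0:ℝ) 1) ∧
      (∑' x, P.pX x * εf x) ≤ ε + (2:ℝ) ^ (-δ) ∧
      ∀ x : X, P.hbarE (εf x) x - ((δ : ℝ) : EReal) ≤ ((C.len x : ℝ) : EReal) := by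
  classical
  have hgsum : Summable (fun z : X × Y => P.p z.1 z.2) := P.hasSum_one.summable
  have hgnn : ∀ z : X × Y, 0 ≤ P.p z.1 z.2 := fun z => P.nonneg _ _
  set g : X × Y → ℝ := fun z => P.p z.1 z.2 with hg
  set A : Set (X × Y) := {z : X × Y | (C.len z.1 : ℝ) + δ < P.iXY z.1 z.2} with hA
  set E : Set (X × Y) := {z : X × Y | C.dec (C.enc z.1) z.2 ≠ z.1} with hE
  refine ⟨fun x => P.tailProb x ((C.len x : ℝ) + δ), ?_, ?_, ?_⟩
  · -- range [0,1]
    intro x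
    constructor
    · exact tsum_nonneg fun y =>
        Set.indicator_nonneg (fun y _ => div_nonneg (P.nonneg x y) (P.margX_pos x).le) y
    · have hs : Summable (fun y => P.condYX x y) := by
        have h := hgsum.prod_factor x
        exact h.div_const (P.pX x)
      have h1 : ∑' y, P.condYX x y = 1 := by
        unfold JointPMF.condYX
        rw [tsum_div_const]
        exact div_self (ne_of_gt (P.margX_pos x))
      calc P.tailProb x ((C.len x : ℝ) + δ)
          ≤ ∑' y, P.condYX x y := by
            apply Summable.tsum_le_tsum _ (hs.indicator _) hs
            intro y
            exact Set.indicator_le_self' (fun y _ =>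
              div_nonneg (P.nonneg x y) (P.margX_pos x).le) y
        _ = 1 := h1
  · -- main bound
    set fk : X × Y → ℝ := fun z => Set.indicator {z : X × Y | C.dec (C.enc z.1) z.2 = z.1}
      (fun z => (2:ℝ) ^ (-((C.len z.1 : ℝ) + δ)) * P.pY z.2) z with hfk
    have hfknn : ∀ z, 0 ≤ fk z := fun z =>
      Set.indicator_nonneg (fun z _ =>
        mul_nonneg (Real.rpow_nonneg (by norm_num) _) (P.margY_pos _).le) z
    set f1 : X × Y → ℝ := A.indicator g with hf1def
    have hf1sum : Summable f1 := hgsum.indicator A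
    have herrsum : Summable (E.indicator g) := hgsum.indicator E
    -- step a : rewrite LHS
    have ha : (∑' x, P.pX x * P.tailProb x ((C.len x : ℝ) + δ)) = ∑' z, f1 z := by
      have hxy : ∀ x : X, P.pX x * P.tailProb x ((C.len x : ℝ) + δ) = ∑' y, f1 (x, y) := by
        intro x
        unfold JointPMF.tailProb
        rw [← tsum_mul_left]
        apply tsum_congr
        intro y
        by_cases hy : (C.len x : ℝ) + δ < P.iXY x y
        · rw [Set.indicator_of_mem (show y ∈ {y : Y | (C.len x : ℝ) + δ < P.iXY x y} from hy),
            hf1def, Set.indicator_of_mem (show (x,y) ∈ A from hy)]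
          show P.pX x * P.condYX x y = P.p x y
          rw [JointPMF.condYX, mul_comm]
          exact div_mul_cancel₀ _ (ne_of_gt (P.margX_pos x))
        · rw [Set.indicator_of_notMem (show y ∉ {y : Y | (C.len x : ℝ) + δ < P.iXY x y} from hy),
            hf1def,
            Set.indicator_of_notMem (show (x,y) ∉ A from hy), mul_zero]
      calc (∑' x, P.pX x * P.tailProb x ((C.len x : ℝ) + δ))
          = ∑' x, ∑' y, f1 (x, y) := tsum_congr hxy
        _ = ∑' z, f1 z := (Summable.tsum_prod' hf1sum fun x => hf1sum.prod_factor x).symm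
    -- pointwise bound
    have hb : ∀ z, f1 z ≤ E.indicator g z + fk z := by
      intro z
      obtain ⟨x, y⟩ := z
      by_cases hzA : (x, y) ∈ A
      swap
      · rw [hf1def, Set.indicator_of_notMem hzA]
        exact add_nonneg (Set.indicator_nonneg (fun z _ => hgnn z) _) (hfknn _)
      rw [hf1def, Set.indicator_of_mem hzA]
      by_cases hd : C.dec (C.enc x) y = x
      · have hfkval : fk (x, y) = (2:ℝ) ^ (-((C.len x : ℝ) + δ)) * P.pY y :=
          Set.indicator_of_mem
            (show (x,y) ∈ {z : X × Y | C.dec (C.enc z.1) z.2 = z.1} from hd) _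
        have hEz : (x, y) ∉ E := by simp [hE, hd]
        rw [Set.indicator_of_notMem hEz, zero_add, hfkval]
        by_cases hp : P.p x y = 0
        · show P.p x y ≤ _
          rw [hp]
          exact mul_nonneg (Real.rpow_nonneg (by norm_num) _) (P.margY_pos y).le
        have hppos : 0 < P.p x y := lt_of_le_of_ne (P.nonneg x y) (Ne.symm hp)
        have hpY : 0 < P.pY y := P.margY_pos y
        have hc : 0 < P.condXY x y := div_pos hppos hpY
        have hiXY : P.iXY x y = - Real.logb 2 (P.condXY x y) := by
          rw [JointPMF.iXY, one_div, Real.logb_inv]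
        have hlt : Real.logb 2 (P.condXY x y) < -((C.len x : ℝ) + δ) := by
          have h2 : (C.len x : ℝ) + δ < P.iXY x y := hzA
          rw [hiXY] at h2
          linarith
        have hc2 : P.condXY x y < (2:ℝ) ^ (-((C.len x : ℝ) + δ)) :=
          (Real.logb_lt_iff_lt_rpow (by norm_num) hc).1 hlt
        have hpe : P.p x y = P.condXY x y * P.pY y := by
          rw [JointPMF.condXY, div_mul_cancel₀ _ (ne_of_gt hpY)]
        show P.p x y ≤ _
        rw [hpe]
        exact mul_le_mul_of_nonneg_right hc2.le hpY.le
      · have hEz : (x, y) ∈ E := hd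
        rw [Set.indicator_of_mem hEz]
        exact le_add_of_nonneg_right (hfknn _)
    -- Kraft bound on finite sums of fk along x, for each y
    have kraftY : ∀ y : Y, ∀ F : Finset X,
        ∑ x ∈ F, fk (x, y) ≤ (2:ℝ) ^ (-δ) * P.pY y := by
      intro y F
      have step1 : ∑ x ∈ F, fk (x, y)
          = ∑ x ∈ F.filter (fun x => C.dec (C.enc x) y = x),
              (2:ℝ) ^ (-((C.len x : ℝ) + δ)) * P.pY y := by
        rw [Finset.sum_filter]
        apply Finset.sum_congr rfl
        intro x _
        by_cases hd : C.dec (C.enc x) y = x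
        · rw [if_pos hd, hfk]
          exact Set.indicator_of_mem
            (show (x,y) ∈ {z : X × Y | C.dec (C.enc z.1) z.2 = z.1} from hd) _
        · rw [if_neg hd, hfk]
          exact Set.indicator_of_notMem
            (show (x,y) ∉ {z : X × Y | C.dec (C.enc z.1) z.2 = z.1} from hd) _
      set F' := F.filter (fun x => C.dec (C.enc x) y = x) with hF'
      have hdec : ∀ x ∈ F', C.dec (C.enc x) y = x := fun x hx => (Finset.mem_filter.1 hx).2
      have hinj : ∀ a ∈ F', ∀ b ∈ F', C.enc a = C.enc b → a = b := by
        intro a ha b hb hab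
        rw [← hdec a ha, ← hdec b hb, hab]
      have step2 : ∑ x ∈ F', (2:ℝ) ^ (-((C.len x : ℝ)))
          = ∑ w ∈ F'.image C.enc, (2:ℝ) ^ (-(w.length : ℝ)) := by
        rw [Finset.sum_image hinj]
        rfl
      have hpf : ∀ w ∈ F'.image C.enc, ∀ w' ∈ F'.image C.enc, w <+: w' → w = w' := by
        intro w hw w' hw' hpre
        obtain ⟨a, _, rfl⟩ := Finset.mem_image.1 hw
        obtain ⟨b, _, rfl⟩ := Finset.mem_image.1 hw'
        exact C.prefixFree a b hpre
      have hkraft := kraft_finset _ hpf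
      calc ∑ x ∈ F, fk (x, y)
          = ∑ x ∈ F', (2:ℝ) ^ (-((C.len x : ℝ) + δ)) * P.pY y := step1
        _ = ((2:ℝ) ^ (-δ) * P.pY y) * ∑ x ∈ F', (2:ℝ) ^ (-(C.len x : ℝ)) := by
            rw [Finset.mul_sum]
            apply Finset.sum_congr rfl
            intro x _
            rw [neg_add, Real.rpow_add (by norm_num)]
            ring
        _ ≤ ((2:ℝ) ^ (-δ) * P.pY y) * 1 := by
            apply mul_le_mul_of_nonneg_left _
              (mul_nonneg (Real.rpow_nonneg (by norm_num) _) (P.margY_pos y).le)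
            rw [step2]; exact hkraft
        _ = (2:ℝ) ^ (-δ) * P.pY y := mul_one _
    have hfkfib : ∀ y, Summable fun x => fk (x, y) := fun y =>
      summable_of_sum_le (fun x => hfknn _) (kraftY y)
    have hswap : Summable (fun w : Y × X => P.p w.2 w.1) :=
      ((Equiv.prodComm Y X).summable_iff).2 hgsum
    have hpYsum : Summable (fun y => P.pY y) :=
      ((summable_prod_of_nonneg (fun w : Y × X => hgnn (w.2, w.1))).1 hswap).2
    have hpY1 : ∑' y, P.pY y = 1 := by
      have h1 : ∑' w : Y × X, P.p w.2 w.1 = 1 := by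
        rw [← P.hasSum_one.tsum_eq]
        exact (Equiv.prodComm Y X).tsum_eq (fun z : X × Y => P.p z.1 z.2)
      rw [← h1, Summable.tsum_prod' hswap (fun y => hswap.prod_factor y)]
      rfl
    have hfkfibsum : ∀ y, ∑' x, fk (x, y) ≤ (2:ℝ) ^ (-δ) * P.pY y := fun y =>
      tsum_le_of_sum_le'
        (mul_nonneg (Real.rpow_nonneg (by norm_num) _) (P.margY_pos y).le) (kraftY y)
    have hfk' : Summable (fun w : Y × X => fk (w.2, w.1)) := by
      rw [summable_prod_of_nonneg (fun w : Y × X => hfknn (w.2, w.1))]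
      refine ⟨fun y => hfkfib y, ?_⟩
      apply Summable.of_nonneg_of_le (fun y => tsum_nonneg fun x => hfknn _) hfkfibsum
      exact hpYsum.mul_left _
    have hfksum : Summable fk := ((Equiv.prodComm Y X).summable_iff).1 hfk'
    have hfktsum : ∑' z, fk z ≤ (2:ℝ) ^ (-δ) := by
      have heq : ∑' z, fk z = ∑' y, ∑' x, fk (x, y) := by
        rw [← (Equiv.prodComm Y X).tsum_eq fk]
        exact Summable.tsum_prod' hfk' (fun y => hfk'.prod_factor y)
      rw [heq]
      calc ∑' y, ∑' x, fk (x, y) ≤ ∑' y, (2:ℝ) ^ (-δ) * P.pY y := by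
            apply Summable.tsum_le_tsum hfkfibsum _ (hpYsum.mul_left _)
            exact ((summable_prod_of_nonneg (fun w : Y × X => hfknn (w.2, w.1))).1 hfk').2
        _ = (2:ℝ) ^ (-δ) * ∑' y, P.pY y := tsum_mul_left
        _ = (2:ℝ) ^ (-δ) := by rw [hpY1, mul_one]
    have herr_eq : (∑' z, E.indicator g z) = C.err P := rfl
    rw [ha]
    calc ∑' z, f1 z ≤ ∑' z, (E.indicator g z + fk z) :=
          Summable.tsum_le_tsum hb hf1sum (herrsum.add hfksum)
      _ = (∑' z, E.indicator g z) + ∑' z, fk z := Summable.tsum_add herrsum hfksum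
      _ ≤ ε + (2:ℝ) ^ (-δ) := add_le_add (le_trans (le_of_eq herr_eq) herr) hfktsum
  · -- length bound
    intro x
    have hmem : (((C.len x : ℝ) + δ : ℝ) : EReal) ∈
        {R : EReal | ∃ r : ℝ, R = (r : EReal) ∧
          P.tailProb x r ≤ P.tailProb x ((C.len x : ℝ) + δ)} :=
      ⟨(C.len x : ℝ) + δ, rfl, le_refl _⟩
    have h1 : P.hbarE (P.tailProb x ((C.len x : ℝ) + δ)) x
        ≤ (((C.len x : ℝ) + δ : ℝ) : EReal) := sInf_le hmem
    apply EReal.sub_le_of_le_add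
    refine le_trans h1 ?_
    rw [← EReal.coe_add]
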